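/- For any non-negative integer n, the sum over k from 0 to n of ((-n)_k (n+1)_k (1/4)_k (3/4)_k) / ((1)_k^2 (1/2)_k (3/2)_k) equals binomial(2n, n)/4^n. -/

import Mathlib

open Finset

/-- The Pochhammer symbol (rising factorial): (a)_0 = 1, (a)_k = a(a+1)⋯(a+k-1). -/
def poch (a : ℚ) : ℕ → ℚ
  | 0 => 1
  | k + 1 => poch a k * (a + k)

lemma poch_succ (a : ℚ) (k : ℕ) : poch a (k+1) = poch a k * (a + k) := rfl

lemma poch_pos (a : ℚ) (ha : 0 < a) (k : ℕ) : 0 < poch a k := by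
  induction k with
  | zero => norm_num [poch]
  | succ m ih =>
    rw [poch_succ]
    have : (0:ℚ) ≤ m := by positivity
    nlinarith

lemma poch_shift (a : ℚ) (k : ℕ) : poch a k * (a + k) = a * poch (a+1) k := by
  induction k with
  | zero => simp [poch]
  | succ m ih =>
    rw [poch_succ, poch_succ]
    push_cast
    linear_combination (a + (m:ℚ) + 1) * ih

lemma poch_neg_vanish (n k : ℕ) (h : n < k) : poch (-(n:ℚ)) k = 0 := by
  induction k with
  | zero => omega
  | succ m ih =>
    rw [poch_succ]
    rcases Nat.lt_or_ge n m with hm | hm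
    · rw [ih hm]; ring
    · have : n = m := by omega
      subst this
      simp

/-- The summand. -/
def T (n k : ℕ) : ℚ :=
  poch (-(n : ℚ)) k * poch ((n : ℚ) + 1) k * poch (1/4) k * poch (3/4) k /
    (poch 1 k ^ 2 * poch (1/2) k * poch (3/2) k)

lemma ratio (n k : ℕ) : T n k * ((n:ℚ)+1+k) = T (n+1) k * ((n:ℚ)+1-k) := by
  unfold T
  push_cast
  have e1 : (-(↑n+1) : ℚ) = -(↑n:ℚ) - 1 := by ring
  rw [e1]
  have h1 : poch (-(n:ℚ)-1) k * ((-(n:ℚ)-1) + k) = (-(n:ℚ)-1) * poch (-(n:ℚ)-1+1) k :=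
    poch_shift _ k
  have e2 : (-(n:ℚ)-1+1) = -(n:ℚ) := by ring
  rw [e2] at h1
  have h2 : poch ((n:ℚ)+1) k * (((n:ℚ)+1) + k) = ((n:ℚ)+1) * poch ((n:ℚ)+1+1) k :=
    poch_shift _ k
  have hn1 : ((n:ℚ)+1) ≠ 0 := by positivity
  have hE : poch 1 k ≠ 0 := ne_of_gt (poch_pos 1 one_pos k)
  have hF : poch (1/2) k ≠ 0 := ne_of_gt (poch_pos _ (by norm_num) k)
  have hG : poch (3/2) k ≠ 0 := ne_of_gt (poch_pos _ (by norm_num) k)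
  have hn2 : (-(n:ℚ)-1) ≠ 0 := by
    have : (0:ℚ) ≤ (n:ℚ) := by positivity
    intro h; nlinarith
  -- express poch (-(n)) k and poch (n+2) k
  have hP : poch (-(n:ℚ)) k = poch (-(n:ℚ)-1) k * ((-(n:ℚ)-1) + k) / (-(n:ℚ)-1) := by
    rw [h1, mul_div_cancel_left₀ _ hn2]
  have hB : poch ((n:ℚ)+1+1) k = poch ((n:ℚ)+1) k * (((n:ℚ)+1) + k) / ((n:ℚ)+1) := by
    rw [h2, mul_div_cancel_left₀ _ hn1]
  rw [hP, hB]
  field_simp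
  ring

lemma step (n k : ℕ) :
    T n (k+1) * ((1+(k:ℚ))^2 * (1/2+(k:ℚ)) * (3/2+(k:ℚ)))
      = T n k * ((-(n:ℚ)+k) * ((n:ℚ)+1+k) * (1/4+(k:ℚ)) * (3/4+(k:ℚ))) := by
  unfold T
  rw [poch_succ, poch_succ, poch_succ, poch_succ, poch_succ, poch_succ, poch_succ]
  have hE : poch 1 k ≠ 0 := ne_of_gt (poch_pos 1 one_pos k)
  have hF : poch (1/2) k ≠ 0 := ne_of_gt (poch_pos _ (by norm_num) k)
  have hG : poch (3/2) k ≠ 0 := ne_of_gt (poch_pos _ (by norm_num) k)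
  have hk1 : ((1:ℚ)+k) ≠ 0 := by positivity
  have hk2 : ((1:ℚ)/2+k) ≠ 0 := by positivity
  have hk3 : ((3:ℚ)/2+k) ≠ 0 := by positivity
  field_simp

/-- WZ certificate. -/
def G (n k : ℕ) : ℚ :=
  -2 * (k:ℚ)^2 * (2*(k:ℚ)-1) * (2*(k:ℚ)+1) * T (n+2) k / (((n:ℚ)+k+1) * ((n:ℚ)+k+2))

lemma key (n k : ℕ) :
    ((2*(n:ℚ)+5)*((n:ℚ)+2)) * T (n+2) k - ((8*(n:ℚ)^2+24*(n:ℚ)+19)/2) * T (n+1) k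
      + ((2*(n:ℚ)+1)*((n:ℚ)+1)) * T n k
    = G n (k+1) - G n k := by
  have h1 : T n k * ((n:ℚ)+1+k) = T (n+1) k * ((n:ℚ)+1-k) := ratio n k
  have h2 : T (n+1) k * ((n:ℚ)+2+k) = T (n+2) k * ((n:ℚ)+2-k) := by
    have := ratio (n+1) k
    push_cast at this ⊢
    linarith [this]
  have h3 : T (n+2) (k+1) * ((1+(k:ℚ))^2 * (1/2+(k:ℚ)) * (3/2+(k:ℚ)))
      = T (n+2) k * ((-(↑(n+2):ℚ)+k) * ((↑(n+2):ℚ)+1+k) * (1/4+(k:ℚ)) * (3/4+(k:ℚ))) :=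
    step (n+2) k
  push_cast at h3
  unfold G
  push_cast
  have d1 : ((n:ℚ)+k+1) ≠ 0 := by positivity
  have d2 : ((n:ℚ)+k+2) ≠ 0 := by positivity
  have d3 : ((n:ℚ)+(k:ℚ)+1+2) ≠ 0 := by positivity
  have hk1 : ((1:ℚ)+k) ≠ 0 := by positivity
  have hk2 : ((1:ℚ)/2+k) ≠ 0 := by positivity
  have hk3 : ((3:ℚ)/2+k) ≠ 0 := by positivity
  -- express T n k, T (n+1) k, T (n+2) (k+1) in terms of T (n+2) k
  have e2 : T (n+1) k = T (n+2) k * ((n:ℚ)+2-k) / ((n:ℚ)+2+k) := by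
    rw [eq_div_iff (by positivity : ((n:ℚ)+2+k) ≠ 0)]; linarith [h2]
  have e1 : T n k = T (n+2) k * ((n:ℚ)+2-k) * ((n:ℚ)+1-k) / (((n:ℚ)+2+k) * ((n:ℚ)+1+k)) := by
    rw [eq_div_iff (by positivity : (((n:ℚ)+2+k) * ((n:ℚ)+1+k)) ≠ 0)]
    have := h1
    rw [e2] at this
    field_simp at this ⊢
    linarith [this]
  have e3 : T (n+2) (k+1)
      = T (n+2) k * ((-((n:ℚ)+2)+k) * (((n:ℚ)+2)+1+k) * (1/4+(k:ℚ)) * (3/4+(k:ℚ)))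
        / ((1+(k:ℚ))^2 * (1/2+(k:ℚ)) * (3/2+(k:ℚ))) := by
    rw [eq_div_iff (by positivity : ((1+(k:ℚ))^2 * (1/2+(k:ℚ)) * (3/2+(k:ℚ))) ≠ 0)]
    rw [h3]
  rw [e1, e2, e3]
  field_simp
  ring

lemma T_vanish (n k : ℕ) (h : n < k) : T n k = 0 := by
  unfold T
  rw [poch_neg_vanish n k h]
  simp

/-- partial sum -/
def S (n : ℕ) : ℚ := ∑ k ∈ Finset.range (n+1), T n k

lemma Srec (n : ℕ) :
    ((2*(n:ℚ)+5)*((n:ℚ)+2)) * S (n+2) - ((8*(n:ℚ)^2+24*(n:ℚ)+19)/2) * S (n+1)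
      + ((2*(n:ℚ)+1)*((n:ℚ)+1)) * S n = 0 := by
  have tele : ∑ k ∈ Finset.range (n+3),
      (((2*(n:ℚ)+5)*((n:ℚ)+2)) * T (n+2) k - ((8*(n:ℚ)^2+24*(n:ℚ)+19)/2) * T (n+1) k
        + ((2*(n:ℚ)+1)*((n:ℚ)+1)) * T n k)
      = G n (n+3) - G n 0 := by
    simp_rw [key]
    exact Finset.sum_range_sub (G n) (n+3)
  have hG0 : G n 0 = 0 := by simp [G]
  have hGn : G n (n+3) = 0 := by
    unfold G
    rw [T_vanish (n+2) (n+3) (by omega)]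
    simp
  rw [hG0, hGn, sub_zero] at tele
  have split : ∑ k ∈ Finset.range (n+3),
      (((2*(n:ℚ)+5)*((n:ℚ)+2)) * T (n+2) k - ((8*(n:ℚ)^2+24*(n:ℚ)+19)/2) * T (n+1) k
        + ((2*(n:ℚ)+1)*((n:ℚ)+1)) * T n k)
      = ((2*(n:ℚ)+5)*((n:ℚ)+2)) * S (n+2) - ((8*(n:ℚ)^2+24*(n:ℚ)+19)/2) * S (n+1)
        + ((2*(n:ℚ)+1)*((n:ℚ)+1)) * S n := by
    rw [Finset.sum_add_distrib, Finset.sum_sub_distrib, ← Finset.mul_sum, ← Finset.mul_sum,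
      ← Finset.mul_sum]
    have hS2 : ∑ k ∈ Finset.range (n+3), T (n+2) k = S (n+2) := rfl
    have hS1 : ∑ k ∈ Finset.range (n+3), T (n+1) k = S (n+1) := by
      rw [show n+3 = (n+1+1)+1 from rfl, Finset.sum_range_succ,
        T_vanish (n+1) (n+2) (by omega), add_zero]
      rfl
    have hS0 : ∑ k ∈ Finset.range (n+3), T n k = S n := by
      rw [show n+3 = (n+1+1)+1 from rfl, Finset.sum_range_succ,
        T_vanish n (n+2) (by omega), add_zero, Finset.sum_range_succ,
        T_vanish n (n+1) (by omega), add_zero]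
      rfl
    rw [hS2, hS1, hS0]
  rw [split] at tele
  linarith [tele]

/-- closed form -/
def R (n : ℕ) : ℚ := (Nat.choose (2*n) n : ℚ) / 4 ^ n

lemma Rstep (n : ℕ) : R (n+1) * (2*(n:ℚ)+2) = R n * (2*(n:ℚ)+1) := by
  have h := Nat.succ_mul_centralBinom_succ n
  have hq := congrArg (fun x : ℕ => (x:ℚ)) h
  push_cast at hq
  unfold R
  rw [show 2*(n+1) = 2*n+2 from by omega]
  unfold Nat.centralBinom at hq
  rw [show 2*(n+1) = 2*n+2 from by omega] at hq
  have h4 : (4:ℚ)^(n+1) = 4 * 4^n := by ring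
  rw [h4]
  have hp : (0:ℚ) < 4^n := by positivity
  field_simp
  nlinarith [hq]

lemma Rrec (n : ℕ) :
    ((2*(n:ℚ)+5)*((n:ℚ)+2)) * R (n+2) - ((8*(n:ℚ)^2+24*(n:ℚ)+19)/2) * R (n+1)
      + ((2*(n:ℚ)+1)*((n:ℚ)+1)) * R n = 0 := by
  have h1 := Rstep n
  have h2 := Rstep (n+1)
  push_cast at h2
  have hn1 : (2*(n:ℚ)+2) ≠ 0 := by positivity
  have hn2 : (2*((n:ℚ)+1)+2) ≠ 0 := by positivity
  have e1 : R (n+1) = R n * (2*(n:ℚ)+1) / (2*(n:ℚ)+2) := by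
    rw [eq_div_iff hn1]; exact h1
  have e2 : R (n+2) = R (n+1) * (2*((n:ℚ)+1)+1) / (2*((n:ℚ)+1)+2) := by
    rw [eq_div_iff hn2]; linarith [h2]
  rw [e2, e1]
  field_simp
  ring

lemma main (n : ℕ) : S n = R n := by
  have both : ∀ m, S m = R m ∧ S (m+1) = R (m+1) := by
    intro m
    induction m with
    | zero =>
      constructor
      · simp [S, R, T, poch, Finset.sum_range_succ]
      · norm_num [S, R, T, poch, Finset.sum_range_succ]
    | succ p ih =>
      refine ⟨ih.2, ?_⟩
      have hs := Srec p
      have hr := Rrec p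
      rw [ih.1, ih.2] at hs
      have hne : ((2*(p:ℚ)+5)*((p:ℚ)+2)) ≠ 0 := by positivity
      have : ((2*(p:ℚ)+5)*((p:ℚ)+2)) * S (p+2) = ((2*(p:ℚ)+5)*((p:ℚ)+2)) * R (p+2) := by
        linarith [hs, hr]
      have := mul_left_cancel₀ hne this
      convert this using 2
  exact (both n).1

theorem stmt4 (n : ℕ) :
    ∑ k ∈ Finset.range (n + 1),
      poch (-(n : ℚ)) k * poch ((n : ℚ) + 1) k * poch (1/4) k * poch (3/4) k /
        (poch 1 k ^ 2 * poch (1/2) k * poch (3/2) k)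
    = (Nat.choose (2 * n) n : ℚ) / 4 ^ n := by
  exact main n
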